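/- Fix r ≥ 1 and Ψ ≥ 2V with V > 0. Let s* > 1 solve s(1+s^r)² = (Ψ/V)(1+(1+r)s^r), and set x = (s*)^r, P_I* = x/(1+x), P_B* = 1/(1+x), b_B* = r P_I* V/(1+r P_I*), b_I* = s* b_B*, and T* = b_I* + P_B* b_B*. Then T* > (r/(r+2))·V. -/
import Mathlib


open Real

theorem total_expenditure_lower_bound (r Ψ V s : ℝ) (hr : 1 ≤ r) (hV : 0 < V)
    (hΨ : 2 * V ≤ Ψ) (hs : 1 < s)
    (heq : s * (1 + s ^ r) ^ 2 = (Ψ / V) * (1 + (1 + r) * s ^ r)) :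
    let x := s ^ r
    let PI := x / (1 + x)
    let PB := 1 / (1 + x)
    let bB := r * PI * V / (1 + r * PI)
    let bI := s * bB
    let T := bI + PB * bB
    r / (r + 2) * V < T := by
  intro x PI PB bB bI T
  have hr0 : 0 < r := lt_of_lt_of_le one_pos hr
  have hx : 1 < x := (Real.one_lt_rpow_iff_of_pos (by linarith)).mpr (Or.inl ⟨hs, hr0⟩)
  have hx0 : 0 < 1 + x := by linarith
  have hPI : 1 / 2 < PI := by
    rw [show PI = x / (1 + x) from rfl, lt_div_iff₀ hx0]; nlinarith
  have hPI1 : PI < 1 := by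
    rw [show PI = x / (1 + x) from rfl, div_lt_one hx0]; linarith
  have hden : 0 < 1 + r * PI := by nlinarith
  have hbB : r / (r + 2) * V < bB := by
    rw [show bB = r * PI * V / (1 + r * PI) from rfl, div_mul_eq_mul_div,
      div_lt_div_iff₀ (by linarith) hden]
    nlinarith [mul_pos (mul_pos hr0 hV) (by linarith : (0:ℝ) < 2 * PI - 1)]
  have hbB0 : 0 < bB := lt_trans (by positivity) hbB
  have hPB : 0 < PB := by
    rw [show PB = 1 / (1 + x) from rfl]; positivity
  have hT : bB < T := by
    show bB < s * bB + PB * bB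
    nlinarith
  exact lt_trans hbB hT
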